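/- Let a, b, c, d ∈ K^× with a ≠ b, c ≠ d, and ad - bc ≠ 0, and let C be the Scholten curve (ad-bc)Y² = ((a-b)X² - (c-d))(aX² - c)(bX² - d). Then the map φ_{c,d}(X,Y) = ( (cd(a-b)/((ad-bc)X²))·(X² - (c-d)/(a-b)), -(cd(c-d)/((ad-bc)X³))·Y ) sends points of C with X ≠ 0 to points of the elliptic curve E_{c,d} : y² = x(x-c)(x-d). -/

import Mathlib

/-- the map `φ_{c,d}` sends points of the Scholten curve
`(ad-bc)Y² = ((a-b)X² - (c-d))(aX² - c)(bX² - d)` with `X ≠ 0` to points of the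
elliptic curve `E_{c,d} : y² = x(x-c)(x-d)`. -/
theorem stmt12 {K : Type*} [Field K] (hchar : (2 : K) ≠ 0)
    (a b c d : K) (ha : a ≠ 0) (hb : b ≠ 0) (hc : c ≠ 0) (hd : d ≠ 0)
    (hab : a ≠ b) (hcd : c ≠ d) (habcd : a * d - b * c ≠ 0)
    (X Y : K) (hX : X ≠ 0)
    (hC : (a * d - b * c) * Y ^ 2 =
      ((a - b) * X ^ 2 - (c - d)) * (a * X ^ 2 - c) * (b * X ^ 2 - d)) :
    (-(c * d * (c - d) / ((a * d - b * c) * X ^ 3)) * Y) ^ 2 =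
      (c * d * (a - b) / ((a * d - b * c) * X ^ 2) * (X ^ 2 - (c - d) / (a - b))) *
        (c * d * (a - b) / ((a * d - b * c) * X ^ 2) * (X ^ 2 - (c - d) / (a - b)) - c) *
        (c * d * (a - b) / ((a * d - b * c) * X ^ 2) * (X ^ 2 - (c - d) / (a - b)) - d) := by
  have hab' : a - b ≠ 0 := sub_ne_zero.mpr hab
  field_simp
  rw [eq_div_iff (by
    exact fun h => habcd (by linear_combination h))]
  field_simp [show d * a - c * b ≠ 0 from fun h => habcd (by linear_combination h)]
  linear_combination (c-d)^2 * hC
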